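/- arXiv:1803.00058 — 2 statements merged into one kernel-verified Lean document; each statement's English description precedes it below -/
import Mathlib

section
/- Let 𝔄 be a complete normed ℝ-algebra with unit (e.g., real n×n matrices with the operator norm) and let A, B ∈ 𝔄. Then there exists a constant C ≥ 0 such that for every h ∈ [0,1], ‖exp(h • (A + B)) − exp((h/2) • A) * exp(h • B) * exp((h/2) • A)‖ ≤ C · h³; i.e., the symmetric Strang splitting approximates the exact propagator to second order (local error of order h³ per step). -/
open NormedSpace Finset

namespace StrangAux

variable {𝔄 : Type*} [NormedRing 𝔄] [NormedAlgebra ℝ 𝔄] [CompleteSpace 𝔄]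

lemma norm_pow_le_c {𝔄 : Type*} [NormedRing 𝔄] (a : 𝔄) (n : ℕ) :
    ‖a ^ n‖ ≤ (1 + ‖(1:𝔄)‖) * ‖a‖ ^ n := by
  cases n with
  | zero =>
      simp only [pow_zero, mul_one]
      linarith [norm_nonneg (1:𝔄)]
  | succ m =>
      refine (norm_pow_le' a m.succ_pos).trans ?_
      exact le_mul_of_one_le_left (pow_nonneg (norm_nonneg a) _)
        (by linarith [norm_nonneg (1:𝔄)])

/-- coefficient of the half-step of `A` -/
noncomputable def u (A : 𝔄) (n : ℕ) : 𝔄 := (n.factorial : ℝ)⁻¹ • (((1:ℝ)/2) ^ n • A ^ n)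

/-- coefficient of the full step of `B` -/
noncomputable def v (B : 𝔄) (n : ℕ) : 𝔄 := (n.factorial : ℝ)⁻¹ • B ^ n

/-- coefficient of the exact propagator -/
noncomputable def s (A B : 𝔄) (n : ℕ) : 𝔄 := (n.factorial : ℝ)⁻¹ • (A + B) ^ n

noncomputable def w (A B : 𝔄) (n : ℕ) : 𝔄 := ∑ k ∈ range (n + 1), u A k * v B (n - k)

noncomputable def q (A B : 𝔄) (n : ℕ) : 𝔄 := ∑ k ∈ range (n + 1), w A B k * u A (n - k)

noncomputable def e (A B : 𝔄) (n : ℕ) : 𝔄 := s A B n - q A B n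

lemma summable_norm_u (A : 𝔄) : Summable fun n => ‖u A n‖ := by
  refine Summable.of_nonneg_of_le (fun n => norm_nonneg _)
    (fun n => ?_) ((Real.summable_pow_div_factorial (‖A‖ / 2)).mul_left (1 + ‖(1:𝔄)‖))
  calc ‖u A n‖ ≤ (n.factorial : ℝ)⁻¹ * (((1:ℝ)/2) ^ n * ((1 + ‖(1:𝔄)‖) * ‖A‖ ^ n)) := by
        refine (_root_.norm_smul_le _ _).trans ?_
        gcongr
        · simp
        · refine (_root_.norm_smul_le _ _).trans ?_
          gcongr
          · simp [abs_of_nonneg]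
          · exact norm_pow_le_c _ _
    _ = (1 + ‖(1:𝔄)‖) * ((‖A‖ / 2) ^ n / n.factorial) := by
        rw [div_pow]
        simp only [one_div, div_pow, one_pow, inv_pow]
        ring

lemma summable_norm_v (B : 𝔄) : Summable fun n => ‖v B n‖ := by
  refine Summable.of_nonneg_of_le (fun n => norm_nonneg _)
    (fun n => ?_) ((Real.summable_pow_div_factorial ‖B‖).mul_left (1 + ‖(1:𝔄)‖))
  calc ‖v B n‖ ≤ (n.factorial : ℝ)⁻¹ * ((1 + ‖(1:𝔄)‖) * ‖B‖ ^ n) := by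
        refine (_root_.norm_smul_le _ _).trans ?_
        gcongr
        · simp
        · exact norm_pow_le_c _ _
    _ = (1 + ‖(1:𝔄)‖) * (‖B‖ ^ n / n.factorial) := by ring

lemma summable_norm_s (A B : 𝔄) : Summable fun n => ‖s A B n‖ := by
  refine Summable.of_nonneg_of_le (fun n => norm_nonneg _)
    (fun n => ?_) ((Real.summable_pow_div_factorial ‖A + B‖).mul_left (1 + ‖(1:𝔄)‖))
  calc ‖s A B n‖ ≤ (n.factorial : ℝ)⁻¹ * ((1 + ‖(1:𝔄)‖) * ‖A + B‖ ^ n) := by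
        refine (_root_.norm_smul_le _ _).trans ?_
        gcongr
        · simp
        · exact norm_pow_le_c _ _
    _ = (1 + ‖(1:𝔄)‖) * (‖A + B‖ ^ n / n.factorial) := by ring

lemma summable_norm_w (A B : 𝔄) : Summable fun n => ‖w A B n‖ :=
  summable_norm_sum_mul_range_of_summable_norm (summable_norm_u A) (summable_norm_v B)

lemma summable_norm_q (A B : 𝔄) : Summable fun n => ‖q A B n‖ :=
  summable_norm_sum_mul_range_of_summable_norm (summable_norm_w A B) (summable_norm_u A)

lemma summable_norm_e (A B : 𝔄) : Summable fun n => ‖e A B n‖ := by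
  refine Summable.of_nonneg_of_le (fun n => norm_nonneg _) (fun n => norm_sub_le _ _)
    ((summable_norm_s A B).add (summable_norm_q A B))

lemma exp_halfA (A : 𝔄) (h : ℝ) :
    exp ((h / 2) • A) = ∑' n : ℕ, h ^ n • u A n := by
  rw [exp_eq_tsum (𝕂 := ℝ)]
  refine tsum_congr fun n => ?_
  rw [u, smul_pow]
  simp only [smul_smul]
  congr 1
  rw [div_pow]
  simp only [one_div, div_pow, one_pow, inv_pow]
  ring

lemma exp_hB (B : 𝔄) (h : ℝ) :
    exp (h • B) = ∑' n : ℕ, h ^ n • v B n := by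
  rw [exp_eq_tsum (𝕂 := ℝ)]
  exact tsum_congr fun n => by rw [smul_pow, v, smul_comm]

lemma exp_hAB (A B : 𝔄) (h : ℝ) :
    exp (h • (A + B)) = ∑' n : ℕ, h ^ n • s A B n := by
  rw [exp_eq_tsum (𝕂 := ℝ)]
  exact tsum_congr fun n => by rw [smul_pow, s, smul_comm]

lemma summable_norm_hu (A : 𝔄) {h : ℝ} (h0 : 0 ≤ h) (h1 : h ≤ 1) :
    Summable fun n => ‖h ^ n • u A n‖ := by
  refine Summable.of_nonneg_of_le (fun n => norm_nonneg _) (fun n => ?_) (summable_norm_u A)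
  rw [norm_smul]
  calc ‖h ^ n‖ * ‖u A n‖ ≤ 1 * ‖u A n‖ := by
        gcongr
        rw [Real.norm_eq_abs, abs_of_nonneg (pow_nonneg h0 n)]
        exact pow_le_one₀ h0 h1
    _ = ‖u A n‖ := one_mul _

lemma summable_norm_hv (B : 𝔄) {h : ℝ} (h0 : 0 ≤ h) (h1 : h ≤ 1) :
    Summable fun n => ‖h ^ n • v B n‖ := by
  refine Summable.of_nonneg_of_le (fun n => norm_nonneg _) (fun n => ?_) (summable_norm_v B)
  rw [norm_smul]
  calc ‖h ^ n‖ * ‖v B n‖ ≤ 1 * ‖v B n‖ := by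
        gcongr
        rw [Real.norm_eq_abs, abs_of_nonneg (pow_nonneg h0 n)]
        exact pow_le_one₀ h0 h1
    _ = ‖v B n‖ := one_mul _

lemma cauchy_w (A B : 𝔄) {h : ℝ} (n : ℕ) :
    ∑ k ∈ range (n + 1), (h ^ k • u A k) * (h ^ (n - k) • v B (n - k)) = h ^ n • w A B n := by
  rw [w, Finset.smul_sum]
  refine Finset.sum_congr rfl fun k hk => ?_
  rw [smul_mul_smul_comm, ← pow_add, Nat.add_sub_cancel' (Nat.lt_succ_iff.mp (mem_range.mp hk))]

lemma cauchy_q (A B : 𝔄) {h : ℝ} (n : ℕ) :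
    ∑ k ∈ range (n + 1), (h ^ k • w A B k) * (h ^ (n - k) • u A (n - k)) = h ^ n • q A B n := by
  rw [q, Finset.smul_sum]
  refine Finset.sum_congr rfl fun k hk => ?_
  rw [smul_mul_smul_comm, ← pow_add, Nat.add_sub_cancel' (Nat.lt_succ_iff.mp (mem_range.mp hk))]

lemma prod_eq (A B : 𝔄) {h : ℝ} (h0 : 0 ≤ h) (h1 : h ≤ 1) :
    exp ((h / 2) • A) * exp (h • B) * exp ((h / 2) • A)
      = ∑' n : ℕ, h ^ n • q A B n := by
  have hu := summable_norm_hu A h0 h1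
  have hv := summable_norm_hv B h0 h1
  have hw : Summable fun n => ‖h ^ n • w A B n‖ := by
    have := summable_norm_sum_mul_range_of_summable_norm hu hv
    simpa only [cauchy_w A B] using this
  rw [exp_halfA, exp_hB,
    tsum_mul_tsum_eq_tsum_sum_range_of_summable_norm hu hv]
  simp only [cauchy_w A B]
  rw [tsum_mul_tsum_eq_tsum_sum_range_of_summable_norm hw hu]
  simp only [cauchy_q A B]

lemma e_zero (A B : 𝔄) : e A B 0 = 0 := by
  simp [e, s, q, w, u, v]

lemma e_one (A B : 𝔄) : e A B 1 = 0 := by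
  simp only [e, s, q, w, u, v, Finset.sum_range_succ, Finset.sum_range_one]
  norm_num
  match_scalars <;> ring

lemma e_two (A B : 𝔄) : e A B 2 = 0 := by
  simp only [e, s, q, w, u, v, Finset.sum_range_succ, Finset.sum_range_one]
  norm_num [Nat.factorial, pow_two, mul_add, add_mul, smul_add, add_smul]
  match_scalars <;> ring

end StrangAux

open StrangAux in
/-- The symmetric Strang splitting approximates the exact propagator to second order:
the local error over a step of size `h` is `O(h³)`. -/
theorem strang_splitting_local_error
    {𝔄 : Type*} [NormedRing 𝔄] [NormedAlgebra ℝ 𝔄] [CompleteSpace 𝔄]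
    (A B : 𝔄) :
    ∃ C : ℝ, 0 ≤ C ∧ ∀ h ∈ Set.Icc (0:ℝ) 1,
      ‖exp (h • (A + B)) - exp ((h / 2) • A) * exp (h • B) * exp ((h / 2) • A)‖
        ≤ C * h ^ 3 := by
  refine ⟨∑' n, ‖e A B n‖, tsum_nonneg fun n => norm_nonneg _, fun h hh => ?_⟩
  obtain ⟨h0, h1⟩ := hh
  have hs : Summable fun n => h ^ n • s A B n := by
    refine Summable.of_norm (Summable.of_nonneg_of_le (fun n => norm_nonneg _)
      (fun n => ?_) (summable_norm_s A B))
    rw [norm_smul]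
    calc ‖h ^ n‖ * ‖s A B n‖ ≤ 1 * ‖s A B n‖ := by
          gcongr
          rw [Real.norm_eq_abs, abs_of_nonneg (pow_nonneg h0 n)]
          exact pow_le_one₀ h0 h1
      _ = _ := one_mul _
  have hq : Summable fun n => h ^ n • q A B n := by
    refine Summable.of_norm (Summable.of_nonneg_of_le (fun n => norm_nonneg _)
      (fun n => ?_) (summable_norm_q A B))
    rw [norm_smul]
    calc ‖h ^ n‖ * ‖q A B n‖ ≤ 1 * ‖q A B n‖ := by
          gcongr
          rw [Real.norm_eq_abs, abs_of_nonneg (pow_nonneg h0 n)]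
          exact pow_le_one₀ h0 h1
      _ = _ := one_mul _
  rw [exp_hAB, prod_eq A B h0 h1, ← Summable.tsum_sub hs hq]
  have he : ∀ n, h ^ n • s A B n - h ^ n • q A B n = h ^ n • e A B n := fun n => by
    rw [e, smul_sub]
  simp only [he]
  have hsum : Summable fun n => ‖h ^ n • e A B n‖ := by
    refine Summable.of_nonneg_of_le (fun n => norm_nonneg _) (fun n => ?_) (summable_norm_e A B)
    rw [norm_smul]
    calc ‖h ^ n‖ * ‖e A B n‖ ≤ 1 * ‖e A B n‖ := by
          gcongr
          rw [Real.norm_eq_abs, abs_of_nonneg (pow_nonneg h0 n)]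
          exact pow_le_one₀ h0 h1
      _ = _ := one_mul _
  calc ‖∑' n, h ^ n • e A B n‖ ≤ ∑' n, ‖h ^ n • e A B n‖ := norm_tsum_le_tsum_norm hsum
    _ ≤ ∑' n, ‖e A B n‖ * h ^ 3 := by
        refine Summable.tsum_le_tsum (fun n => ?_) hsum ((summable_norm_e A B).mul_right _)
        rcases lt_or_ge n 3 with hn | hn
        · interval_cases n <;>
            simp [e_zero, e_one, e_two, mul_nonneg (norm_nonneg _) (pow_nonneg h0 3)]
        · rw [norm_smul, Real.norm_eq_abs, abs_of_nonneg (pow_nonneg h0 n), mul_comm]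
          exact mul_le_mul_of_nonneg_left (pow_le_pow_of_le_one h0 h1 hn) (norm_nonneg _)
    _ = (∑' n, ‖e A B n‖) * h ^ 3 := tsum_mul_right
end

section
/- Let 𝔄 be a complete normed ℝ-algebra with unit (e.g., real n×n matrices with the operator norm) and let L ∈ 𝔄. Then there exist constants C ≥ 0 and h₀ > 0 such that for every h with 0 < h ≤ h₀, the element 1 − (h/2) • L is a unit in 𝔄 and ‖exp(h • L) − (1 − (h/2) • L)⁻¹ * (1 + (h/2) • L)‖ ≤ C · h³; i.e., the Crank–Nicolson (Cayley) rational approximation of the exponential has local error of order h³, making the scheme second-order accurate. -/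
open NormedSpace Nat

private lemma fact_lower (n : ℕ) : 6 * 2 ^ n ≤ (n + 3)! := by
  induction n with
  | zero => simp [Nat.factorial]
  | succ k ih =>
      have h1 : (k + 1 + 3)! = (k + 4) * (k + 3)! := rfl
      calc 6 * 2 ^ (k + 1) = 2 * (6 * 2 ^ k) := by ring
        _ ≤ 2 * (k + 3)! := by omega
        _ ≤ (k + 4) * (k + 3)! := Nat.mul_le_mul_right _ (by omega)
        _ = (k + 1 + 3)! := h1.symm

private lemma exp_taylor3 {𝔄 : Type*} [NormedRing 𝔄] [NormedAlgebra ℝ 𝔄] [CompleteSpace 𝔄]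
    (x : 𝔄) (hx : ‖x‖ ≤ 1) :
    ‖exp x - (1 + x + (2:ℝ)⁻¹ • x ^ 2)‖ ≤ ‖x‖ ^ 3 := by
  have hs : Summable fun n : ℕ => ((n ! : ℝ)⁻¹) • x ^ n := expSeries_summable' (𝕂 := ℝ) x
  have hsplit := Summable.sum_add_tsum_nat_add 3 hs
  have hexp : exp x = ∑' n : ℕ, ((n ! : ℝ)⁻¹) • x ^ n := by
    rw [exp_eq_tsum ℝ]
  have hpart : (∑ i ∈ Finset.range 3, ((i !:ℝ)⁻¹) • x ^ i) = 1 + x + (2:ℝ)⁻¹ • x ^ 2 := by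
    simp [Finset.sum_range_succ, Nat.factorial]
  have htail : exp x - (1 + x + (2:ℝ)⁻¹ • x ^ 2)
      = ∑' n : ℕ, (((n + 3)! : ℝ)⁻¹) • x ^ (n + 3) := by
    rw [hexp, ← hsplit, hpart]
    exact add_sub_cancel_left _ _
  rw [htail]
  have hgeom : HasSum (fun n : ℕ => ‖x‖ ^ 3 * 6⁻¹ * (1/2 : ℝ) ^ n) (‖x‖ ^ 3 * 6⁻¹ * 2) :=
    hasSum_geometric_two.mul_left _
  have hbound : ∀ n : ℕ, ‖(((n + 3)! : ℝ)⁻¹) • x ^ (n + 3)‖ ≤ ‖x‖ ^ 3 * 6⁻¹ * (1/2 : ℝ) ^ n := by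
    intro n
    have h1 : ‖(((n + 3)! : ℝ)⁻¹) • x ^ (n + 3)‖ ≤ (((n + 3)! : ℝ)⁻¹) * ‖x‖ ^ (n + 3) := by
      rw [norm_smul, Real.norm_eq_abs, abs_of_nonneg (by positivity)]
      exact mul_le_mul_of_nonneg_left (norm_pow_le' x (by omega)) (by positivity)
    have h2 : ‖x‖ ^ (n + 3) ≤ ‖x‖ ^ 3 :=
      pow_le_pow_of_le_one (norm_nonneg x) hx (by omega)
    have h3 : (((n + 3)! : ℝ)⁻¹) ≤ 6⁻¹ * (1/2 : ℝ) ^ n := by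
      rw [one_div, inv_pow, ← mul_inv]
      apply inv_anti₀ (by positivity)
      exact_mod_cast fact_lower n
    calc ‖(((n + 3)! : ℝ)⁻¹) • x ^ (n + 3)‖ ≤ (((n + 3)! : ℝ)⁻¹) * ‖x‖ ^ (n + 3) := h1
      _ ≤ (6⁻¹ * (1/2 : ℝ) ^ n) * ‖x‖ ^ 3 := by
          apply mul_le_mul h3 h2 (by positivity) (by positivity)
      _ = ‖x‖ ^ 3 * 6⁻¹ * (1/2 : ℝ) ^ n := by ring
  have := tsum_of_norm_bounded hgeom hbound
  calc ‖∑' n : ℕ, (((n + 3)! : ℝ)⁻¹) • x ^ (n + 3)‖ ≤ ‖x‖ ^ 3 * 6⁻¹ * 2 := this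
    _ ≤ ‖x‖ ^ 3 := by nlinarith [pow_nonneg (norm_nonneg x) 3]

/-- The Crank–Nicolson (Cayley) rational approximation of the exponential has local
error of order `h³`: for all sufficiently small `h > 0`, `1 − (h/2) L` is a unit and
`‖exp(hL) − (1 − (h/2)L)⁻¹ (1 + (h/2)L)‖ ≤ C h³`. -/
theorem cayley_approximation_local_error
    {𝔄 : Type*} [NormedRing 𝔄] [NormedAlgebra ℝ 𝔄] [CompleteSpace 𝔄]
    (L : 𝔄) :
    ∃ C : ℝ, 0 ≤ C ∧ ∃ h₀ : ℝ, 0 < h₀ ∧ ∀ h : ℝ, 0 < h → h ≤ h₀ →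
      IsUnit (1 - (h / 2) • L) ∧
      ‖exp (h • L) - Ring.inverse (1 - (h / 2) • L) * (1 + (h / 2) • L)‖
        ≤ C * h ^ 3 := by
  set K : ℝ := ‖(1:𝔄)‖ + 1 with hK
  have hK0 : 0 ≤ K := by positivity
  have hKK0 : 0 ≤ (K + 1) * K := mul_nonneg (by linarith) hK0
  refine ⟨‖L‖ ^ 3 * (2 + (K + 1) * K),
    mul_nonneg (pow_nonneg (norm_nonneg L) 3) (by linarith), 1 / (‖L‖ + 1), by positivity, ?_⟩
  intro h hh0 hh1
  have hL1 : 0 < ‖L‖ + 1 := by positivity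
  have hhL : h * ‖L‖ ≤ 1 := by
    rw [le_div_iff₀ hL1] at hh1
    nlinarith [norm_nonneg L]
  set a : 𝔄 := (h / 2) • L with ha
  have hna : ‖a‖ = h / 2 * ‖L‖ := by
    rw [ha, norm_smul, Real.norm_eq_abs, abs_of_pos (by linarith)]
  have hna2 : ‖a‖ ≤ 1 / 2 := by rw [hna]; nlinarith
  have hna1 : ‖a‖ < 1 := lt_of_le_of_lt hna2 (by norm_num)
  refine ⟨isUnit_one_sub_of_norm_lt_one hna1, ?_⟩
  set v : 𝔄 := Ring.inverse (1 - a) with hv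
  -- norm bound for the inverse
  have hvnorm : ‖v‖ ≤ K + 1 := by
    rw [hv, ← geom_series_eq_inverse a hna1]
    refine le_trans (tsum_geometric_le_of_norm_lt_one a hna1) ?_
    have : (1 - ‖a‖)⁻¹ ≤ 2 := by
      rw [inv_le_iff_one_le_mul₀ (by linarith)]
      linarith
    rw [hK]; linarith
  -- basic identities
  have hmul : (1 - a) * v = 1 := Ring.mul_inverse_cancel _ (isUnit_one_sub_of_norm_lt_one hna1)
  have hmul' : v * (1 - a) = 1 := Ring.inverse_mul_cancel _ (isUnit_one_sub_of_norm_lt_one hna1)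
  have hcomm : a * v = v * a := by
    have h1 : v * ((1 - a) * a) * v = v * (a * (1 - a)) * v := by noncomm_ring
    calc a * v = v * (1 - a) * a * v := by rw [hmul', one_mul]
      _ = v * ((1 - a) * a) * v := by noncomm_ring
      _ = v * (a * (1 - a)) * v := h1
      _ = v * a * ((1 - a) * v) := by noncomm_ring
      _ = v * a := by rw [hmul, mul_one]
  have hstep : v = 1 + a * v := by
    have h2 : (1 - a) * v = v - a * v := by noncomm_ring
    have h3 : v - a * v = 1 := by rw [← h2]; exact hmul
    rw [sub_eq_iff_eq_add] at h3
    exact h3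
  have hv3 : v = 1 + a * (1 + a * (1 + a * v)) := by
    conv_lhs => rw [hstep, hstep, hstep]
  -- the quadratic Taylor polynomial of exp (h • L)
  have hx1 : ‖h • L‖ ≤ 1 := by
    rw [norm_smul, Real.norm_eq_abs, abs_of_pos hh0]; exact hhL
  have htaylor := exp_taylor3 (h • L) hx1
  have hT : (1 : 𝔄) + (h • L) + (2:ℝ)⁻¹ • (h • L) ^ 2 = 1 + (2:ℝ) • a + (2:ℝ) • a ^ 2 := by
    rw [ha, smul_pow, smul_pow]
    module
  -- key algebraic identity
  have key : exp (h • L) - v * (1 + a)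
      = (exp (h • L) - (1 + (h • L) + (2:ℝ)⁻¹ • (h • L) ^ 2)) - a ^ 3 - a ^ 3 * (v * (1 + a)) := by
    rw [hT, two_smul, two_smul]
    conv_lhs => rw [hv3]
    noncomm_ring
  have hnvmul : ‖v * (1 + a)‖ ≤ (K + 1) * K := by
    refine le_trans (norm_mul_le _ _) (mul_le_mul hvnorm ?_ (norm_nonneg _) (by linarith))
    refine le_trans (norm_add_le _ _) ?_
    rw [hK]; linarith
  have hna3 : ‖a ^ 3‖ ≤ (h * ‖L‖) ^ 3 := by
    refine le_trans (norm_pow_le' a (by norm_num)) ?_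
    apply pow_le_pow_left₀ (norm_nonneg a)
    rw [hna]; nlinarith [norm_nonneg L]
  have hfinal : ‖exp (h • L) - v * (1 + a)‖
      ≤ (h * ‖L‖) ^ 3 + (h * ‖L‖) ^ 3 + (h * ‖L‖) ^ 3 * ((K + 1) * K) := by
    rw [key]
    have t1 : ‖exp (h • L) - (1 + (h • L) + (2:ℝ)⁻¹ • (h • L) ^ 2)‖ ≤ (h * ‖L‖) ^ 3 := by
      refine le_trans htaylor ?_
      rw [norm_smul, Real.norm_eq_abs, abs_of_pos hh0]
    have t3 : ‖a ^ 3 * (v * (1 + a))‖ ≤ (h * ‖L‖) ^ 3 * ((K + 1) * K) := by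
      refine le_trans (norm_mul_le _ _) ?_
      exact mul_le_mul hna3 hnvmul (norm_nonneg _) (by positivity)
    calc ‖exp (h • L) - (1 + (h • L) + (2:ℝ)⁻¹ • (h • L) ^ 2) - a ^ 3 - a ^ 3 * (v * (1 + a))‖
        ≤ ‖exp (h • L) - (1 + (h • L) + (2:ℝ)⁻¹ • (h • L) ^ 2) - a ^ 3‖ + ‖a ^ 3 * (v * (1 + a))‖ :=
          norm_sub_le _ _
      _ ≤ (‖exp (h • L) - (1 + (h • L) + (2:ℝ)⁻¹ • (h • L) ^ 2)‖ + ‖a ^ 3‖) + ‖a ^ 3 * (v * (1 + a))‖ := by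
          gcongr; exact norm_sub_le _ _
      _ ≤ (h * ‖L‖) ^ 3 + (h * ‖L‖) ^ 3 + (h * ‖L‖) ^ 3 * ((K + 1) * K) := by
          gcongr
  refine le_trans hfinal (le_of_eq ?_)
  ring
end
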